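/- For 0 < q < p ≤ 1, n ≥ 1, and x ∈ [0,1], the second central moment of the revised (p,q)-Bernstein operator satisfies B_{n,p,q}((t − x)²; x) = (p^{n−1}/[n]_{p,q})·x(1 − x) ≤ p^{n−1}/(4·[n]_{p,q}). -/

import Mathlib

open Finset

noncomputable def pqInt (p q : ℝ) (m : ℕ) : ℝ := (p ^ m - q ^ m) / (p - q)

noncomputable def pqFact (p q : ℝ) (m : ℕ) : ℝ := ∏ j ∈ Finset.Icc 1 m, pqInt p q j

noncomputable def pqChoose (p q : ℝ) (n k : ℕ) : ℝ :=
  pqFact p q n / (pqFact p q k * pqFact p q (n - k))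

/-- The sample node `[k]_{p,q}/(p^{k-n}[n]_{p,q}) = p^{n-k}[k]_{p,q}/[n]_{p,q}`. -/
noncomputable def pqNode (p q : ℝ) (n k : ℕ) : ℝ :=
  p ^ (n - k) * pqInt p q k / pqInt p q n

/-- Basis function `b_{n,k}(x)` of the revised (p,q)-Bernstein operator. -/
noncomputable def pqBasis (p q : ℝ) (n k : ℕ) (x : ℝ) : ℝ :=
  (p ^ (n * (n - 1) / 2))⁻¹ * pqChoose p q n k * p ^ (k * (k - 1) / 2) * x ^ k *
    ∏ s ∈ Finset.range (n - k), (p ^ s - q ^ s * x)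

/-- The revised (p,q)-Bernstein operator. -/
noncomputable def pqBern (p q : ℝ) (n : ℕ) (f : ℝ → ℝ) (x : ℝ) : ℝ :=
  ∑ k ∈ Finset.range (n + 1), pqBasis p q n k x * f (pqNode p q n k)

set_option linter.unusedSectionVars false
set_option linter.unusedVariables false








section
variable {p q : ℝ} (hq : 0 < q) (hqp : q < p)
include hq hqp

omit hq in
lemma pq_sub_ne : p - q ≠ 0 := sub_ne_zero.2 (ne_of_gt hqp)

lemma pqInt_pos {m : ℕ} (hm : 1 ≤ m) : 0 < pqInt p q m := by
  have h : q ^ m < p ^ m := pow_lt_pow_left₀ hqp hq.le (by omega)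
  exact div_pos (by linarith) (by linarith)

omit hq hqp in
lemma pqInt_zero : pqInt p q 0 = 0 := by simp [pqInt]

omit hq in
lemma pqInt_one : pqInt p q 1 = 1 := by
  simp [pqInt]
  exact pq_sub_ne hqp

omit hq in
lemma pqInt_add (a b : ℕ) : pqInt p q (a + b) = p ^ a * pqInt p q b + q ^ b * pqInt p q a := by
  unfold pqInt
  field_simp
  ring

omit hq in
lemma pqInt_succ (m : ℕ) : pqInt p q (m + 1) = q * pqInt p q m + p ^ m := by
  have h := pqInt_add hqp m 1
  rw [pqInt_one hqp] at h
  rw [h]; ring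

omit hq hqp in
lemma pqFact_zero : pqFact p q 0 = 1 := by simp [pqFact]

omit hq hqp in
lemma pqFact_succ (m : ℕ) : pqFact p q (m + 1) = pqFact p q m * pqInt p q (m + 1) := by
  unfold pqFact
  rw [Finset.prod_Icc_succ_top (by omega)]

lemma pqFact_pos (m : ℕ) : 0 < pqFact p q m :=
  Finset.prod_pos fun j hj => pqInt_pos hq hqp (Finset.mem_Icc.1 hj).1

lemma pqChoose_zero (n : ℕ) : pqChoose p q n 0 = 1 := by
  unfold pqChoose
  rw [pqFact_zero, Nat.sub_zero, one_mul, div_self (pqFact_pos hq hqp n).ne']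

lemma pqChoose_self (n : ℕ) : pqChoose p q n n = 1 := by
  unfold pqChoose
  rw [Nat.sub_self, pqFact_zero, mul_one, div_self (pqFact_pos hq hqp n).ne']

lemma pqPascal (a b : ℕ) : pqChoose p q (a + b + 2) (a + 1) =
    p ^ (a + 1) * pqChoose p q (a + b + 1) (a + 1) + q ^ (b + 1) * pqChoose p q (a + b + 1) a := by
  unfold pqChoose
  rw [show a + b + 2 - (a + 1) = b + 1 by omega, show a + b + 1 - (a + 1) = b by omega,
    show a + b + 1 - a = b + 1 by omega, show a + b + 2 = (a + b + 1) + 1 from rfl,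
    pqFact_succ (a + b + 1), pqFact_succ b, pqFact_succ a]
  have key : pqInt p q (a + b + 1 + 1) = p ^ (a+1) * pqInt p q (b+1) + q ^ (b+1) * pqInt p q (a+1) := by
    rw [show a + b + 1 + 1 = (a+1) + (b+1) by omega]; exact pqInt_add hqp _ _
  have h1 := (pqFact_pos hq hqp a).ne'
  have h2 := (pqFact_pos hq hqp b).ne'
  have h3 := (pqFact_pos hq hqp (a+1)).ne'
  have h4 := (pqFact_pos hq hqp (b+1)).ne'
  have h5 := (pqInt_pos hq hqp (show 1 ≤ a+1 by omega)).ne'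
  have h6 := (pqInt_pos hq hqp (show 1 ≤ b+1 by omega)).ne'
  rw [key, pqFact_succ a, pqFact_succ b] at *
  field_simp

lemma pqChoose_mul (n k : ℕ) : pqChoose p q (n + 1) (k + 1) * pqInt p q (k + 1) =
    pqInt p q (n + 1) * pqChoose p q n k := by
  unfold pqChoose
  rw [show n + 1 - (k + 1) = n - k by omega, pqFact_succ n, pqFact_succ k]
  have h1 := (pqFact_pos hq hqp n).ne'
  have h2 := (pqFact_pos hq hqp k).ne'
  have h3 := (pqFact_pos hq hqp (n - k)).ne'
  have h5 := (pqInt_pos hq hqp (show 1 ≤ k+1 by omega)).ne'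
  field_simp

end

section
variable {p q : ℝ} (hq : 0 < q) (hqp : q < p)
include hq hqp

omit hq hqp in
lemma tri_succ (n : ℕ) : (n + 1) * n / 2 = n * (n - 1) / 2 + n := by
  have h : n * (n - 1) + 2 * n = (n + 1) * n := by
    cases n with
    | zero => rfl
    | succ m => simp [Nat.succ_sub_one]; ring
  rw [← h, Nat.add_mul_div_left _ _ (by norm_num : 0 < 2)]

lemma pqSum0 (x : ℝ) : ∀ n : ℕ, ∑ k ∈ Finset.range (n + 1),
    pqChoose p q n k * p ^ (k * (k - 1) / 2) * x ^ k *
      ∏ s ∈ Finset.range (n - k), (p ^ s - q ^ s * x) = p ^ (n * (n - 1) / 2) := by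
  intro n
  induction n with
  | zero => simp [pqChoose_self hq hqp]
  | succ n ih =>
    set B : ℕ → ℝ := fun k => pqChoose p q n k * p ^ (k * (k - 1) / 2) * x ^ k *
      ∏ s ∈ Finset.range (n - k), (p ^ s - q ^ s * x) with hB
    set A : ℕ → ℝ := fun k => pqChoose p q (n+1) k * p ^ (k * (k - 1) / 2) * x ^ k *
      ∏ s ∈ Finset.range (n + 1 - k), (p ^ s - q ^ s * x) with hA
    set F : ℕ → ℝ := fun k => B k * (p ^ n - p ^ k * q ^ (n - k) * x) with hF
    set G : ℕ → ℝ := fun k => B k * (q ^ (n - k) * p ^ k * x) with hG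
    have hA0 : A 0 = F 0 := by
      simp only [hA, hF, hB, pqChoose_zero hq hqp]
      rw [Nat.sub_zero, Nat.sub_zero, Finset.prod_range_succ]
      simp
    have hAn : A (n + 1) = G n := by
      simp only [hA, hG, hB, pqChoose_self hq hqp, Nat.sub_self, Nat.add_sub_cancel,
        Finset.prod_range_zero]
      rw [tri_succ]
      ring
    have hmid : ∀ k ∈ Finset.range n, A (k + 1) = F (k + 1) + G k := by
      intro k hk
      rw [Finset.mem_range] at hk
      simp only [hA, hF, hG, hB, Nat.add_sub_cancel]
      rw [show n + 1 = k + (n - 1 - k) + 2 by omega, pqPascal hq hqp k (n - 1 - k),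
        show k + (n - 1 - k) + 2 = n + 1 by omega, show k + (n - 1 - k) + 1 = n by omega]
      rw [show n + 1 - (k + 1) = (n - (k + 1)) + 1 by omega, Finset.prod_range_succ]
      rw [show n - 1 - k + 1 = n - k by omega]
      rw [show (k + 1) * k / 2 = k * (k - 1) / 2 + k from tri_succ k]
      rw [show n - k = (n - (k + 1)) + 1 by omega, Finset.prod_range_succ]
      rw [show (p:ℝ) ^ n = p ^ (k + 1) * p ^ (n - (k + 1)) by
        rw [← pow_add]; congr 1; omega]
      ring
    have split : ∑ k ∈ Finset.range (n + 2), A k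
        = ∑ k ∈ Finset.range (n + 1), (F k + G k) := by
      rw [Finset.sum_range_succ' A (n + 1), Finset.sum_range_succ (fun k => A (k+1)) n]
      rw [Finset.sum_add_distrib, Finset.sum_range_succ' F n, Finset.sum_range_succ G n]
      rw [hA0, hAn, Finset.sum_congr rfl hmid, Finset.sum_add_distrib]
      ring
    calc ∑ k ∈ Finset.range (n + 2), A k = ∑ k ∈ Finset.range (n + 1), (F k + G k) := split
      _ = ∑ k ∈ Finset.range (n + 1), p ^ n * B k := by
          apply Finset.sum_congr rfl; intro k hk; simp only [hF, hG]; ring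
      _ = p ^ n * p ^ (n * (n - 1) / 2) := by rw [← Finset.mul_sum, ih]
      _ = p ^ ((n + 1) * n / 2) := by rw [tri_succ, pow_add]; ring

end







section
variable {p q : ℝ} (hq : 0 < q) (hqp : q < p)
include hq hqp

lemma pqBasis_sum (n : ℕ) (x : ℝ) : ∑ k ∈ Finset.range (n + 1), pqBasis p q n k x = 1 := by
  have hp0 : (0:ℝ) < p := lt_trans hq hqp
  have h : ∑ k ∈ Finset.range (n + 1), pqBasis p q n k x
      = (p ^ (n * (n - 1) / 2))⁻¹ * ∑ k ∈ Finset.range (n + 1),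
          (pqChoose p q n k * p ^ (k * (k - 1) / 2) * x ^ k *
            ∏ s ∈ Finset.range (n - k), (p ^ s - q ^ s * x)) := by
    rw [Finset.mul_sum]
    apply Finset.sum_congr rfl
    intro k _
    simp only [pqBasis]; ring
  rw [h, pqSum0 hq hqp, inv_mul_cancel₀ (pow_ne_zero _ hp0.ne')]

omit hq hqp in
lemma pqNode_zero (n : ℕ) : pqNode p q n 0 = 0 := by
  simp [pqNode, pqInt]

lemma pqBasis_node (n j : ℕ) (hj : j ≤ n) (x : ℝ) :
    pqBasis p q (n + 1) (j + 1) x * pqNode p q (n + 1) (j + 1) = x * pqBasis p q n j x := by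
  have hp0 : (0:ℝ) < p := lt_trans hq hqp
  have hn1 : pqInt p q (n + 1) ≠ 0 := (pqInt_pos hq hqp (by omega)).ne'
  have hj1 : pqInt p q (j + 1) ≠ 0 := (pqInt_pos hq hqp (by omega)).ne'
  have key := pqChoose_mul hq hqp n j
  have hC : pqChoose p q (n + 1) (j + 1)
      = pqInt p q (n + 1) * pqChoose p q n j / pqInt p q (j + 1) := by
    field_simp; linarith [key]
  unfold pqBasis pqNode
  rw [show n + 1 - (j + 1) = n - j by omega, hC,
    show (n + 1) * (n + 1 - 1) / 2 = n * (n - 1) / 2 + n by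
      rw [Nat.add_sub_cancel]; exact tri_succ n,
    show (j + 1) * (j + 1 - 1) / 2 = j * (j - 1) / 2 + j by
      rw [Nat.add_sub_cancel]; exact tri_succ j,
    show (p:ℝ) ^ (n * (n - 1) / 2 + n) = p ^ (n * (n - 1) / 2) * (p ^ (n - j) * p ^ j) by
      rw [← pow_add, ← pow_add]; congr 1; omega,
    pow_add, pow_succ]
  field_simp

lemma pqNode_split (n j : ℕ) (hj : j ≤ n) :
    pqNode p q (n + 1) (j + 1) =
      q * pqInt p q n / pqInt p q (n + 1) * pqNode p q n j + p ^ n / pqInt p q (n + 1) := by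
  cases n with
  | zero =>
    interval_cases j
    simp [pqNode, pqInt_zero, pqInt_one hqp]
  | succ m =>
    have hn : pqInt p q (m + 1) ≠ 0 := (pqInt_pos hq hqp (by omega)).ne'
    have hn1 : pqInt p q (m + 2) ≠ 0 := (pqInt_pos hq hqp (by omega)).ne'
    unfold pqNode
    rw [show m + 1 + 1 - (j + 1) = m + 1 - j by omega, pqInt_succ hqp j]
    have hpow : (p:ℝ) ^ (m + 1 - j) * p ^ j = p ^ (m + 1) := by
      rw [← pow_add]; congr 1; omega
    rw [← hpow]
    field_simp

lemma pqBasis_node_sum (n : ℕ) (x : ℝ) :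
    ∑ k ∈ Finset.range (n + 2), pqBasis p q (n + 1) k x * pqNode p q (n + 1) k = x := by
  rw [Finset.sum_range_succ', pqNode_zero, mul_zero, add_zero]
  have h : ∀ j ∈ Finset.range (n + 1), pqBasis p q (n + 1) (j + 1) x * pqNode p q (n + 1) (j + 1)
      = x * pqBasis p q n j x := fun j hj =>
    pqBasis_node hq hqp n j (Nat.lt_succ_iff.mp (Finset.mem_range.1 hj)) x
  rw [Finset.sum_congr rfl h, ← Finset.mul_sum, pqBasis_sum hq hqp, mul_one]

end

section
variable {p q : ℝ} (hq : 0 < q) (hqp : q < p)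
include hq hqp

lemma pqMoment2 (n : ℕ) (x : ℝ) :
    ∑ k ∈ Finset.range (n + 2), pqBasis p q (n + 1) k x * pqNode p q (n + 1) k ^ 2
      = x * (q * pqInt p q n / pqInt p q (n + 1) * x + p ^ n / pqInt p q (n + 1)) := by
  rw [Finset.sum_range_succ', pqNode_zero]
  rw [show (0:ℝ) ^ 2 = 0 by norm_num, mul_zero, add_zero]
  have h : ∀ j ∈ Finset.range (n + 1),
      pqBasis p q (n + 1) (j + 1) x * pqNode p q (n + 1) (j + 1) ^ 2
        = (q * pqInt p q n / pqInt p q (n + 1) * x) *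
            (pqBasis p q n j x * pqNode p q n j) +
          (p ^ n / pqInt p q (n + 1) * x) * pqBasis p q n j x := by
    intro j hj
    have hj' : j ≤ n := Nat.lt_succ_iff.mp (Finset.mem_range.1 hj)
    rw [pow_two, ← mul_assoc, pqBasis_node hq hqp n j hj' x, pqNode_split hq hqp n j hj']
    ring
  rw [Finset.sum_congr rfl h, Finset.sum_add_distrib, ← Finset.mul_sum, ← Finset.mul_sum,
    pqBasis_sum hq hqp, mul_one]
  cases n with
  | zero =>
    simp [pqInt_zero, pqNode_zero]
    ring
  | succ m =>
    rw [pqBasis_node_sum hq hqp m x]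
    ring

theorem pqBern_central_moment' (n : ℕ) (hn : 1 ≤ n) (hp : p ≤ 1) (x : ℝ)
    (hx : x ∈ Set.Icc (0:ℝ) 1) :
    pqBern p q n (fun t => (t - x) ^ 2) x = (p ^ (n - 1) / pqInt p q n) * x * (1 - x) ∧
      pqBern p q n (fun t => (t - x) ^ 2) x ≤ p ^ (n - 1) / (4 * pqInt p q n) := by
  have hp0 : (0:ℝ) < p := lt_trans hq hqp
  obtain ⟨m, rfl⟩ : ∃ m, n = m + 1 := ⟨n - 1, by omega⟩
  have hI : 0 < pqInt p q (m + 1) := pqInt_pos hq hqp (by omega)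
  have key : pqBern p q (m + 1) (fun t => (t - x) ^ 2) x
      = p ^ m / pqInt p q (m + 1) * x * (1 - x) := by
    simp only [pqBern]
    have expand : ∀ k ∈ Finset.range (m + 2),
        pqBasis p q (m + 1) k x * (pqNode p q (m + 1) k - x) ^ 2
          = pqBasis p q (m + 1) k x * pqNode p q (m + 1) k ^ 2
            - (2 * x) * (pqBasis p q (m + 1) k x * pqNode p q (m + 1) k)
            + x ^ 2 * pqBasis p q (m + 1) k x := by
      intro k _; ring
    rw [Finset.sum_congr rfl expand, Finset.sum_add_distrib, Finset.sum_sub_distrib,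
      ← Finset.mul_sum, ← Finset.mul_sum, pqMoment2 hq hqp, pqBasis_node_sum hq hqp,
      pqBasis_sum hq hqp]
    have hsucc := pqInt_succ hqp m
    rw [hsucc]
    have h0 : q * pqInt p q m + p ^ m ≠ 0 := by rw [← hsucc]; exact hI.ne'
    field_simp
    ring
  rw [show m + 1 - 1 = m from rfl]
  refine ⟨key, ?_⟩
  rw [key]
  obtain ⟨hx0, hx1⟩ := hx
  have h14 : x * (1 - x) ≤ 1 / 4 := by nlinarith [sq_nonneg (x - 1/2)]
  have hpm : (0:ℝ) < p ^ m := pow_pos hp0 m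
  calc p ^ m / pqInt p q (m + 1) * x * (1 - x)
      = (p ^ m / pqInt p q (m + 1)) * (x * (1 - x)) := by ring
    _ ≤ (p ^ m / pqInt p q (m + 1)) * (1 / 4) :=
        mul_le_mul_of_nonneg_left h14 (by positivity)
    _ = p ^ m / (4 * pqInt p q (m + 1)) := by
        rw [div_mul_div_comm, mul_one, mul_comm]

end


theorem pqBern_central_moment (p q : ℝ) (n : ℕ) (hn : 1 ≤ n)
    (hq : 0 < q) (hqp : q < p) (hp : p ≤ 1) (x : ℝ) (hx : x ∈ Set.Icc (0:ℝ) 1) :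
    pqBern p q n (fun t => (t - x) ^ 2) x = (p ^ (n - 1) / pqInt p q n) * x * (1 - x) ∧
      pqBern p q n (fun t => (t - x) ^ 2) x ≤ p ^ (n - 1) / (4 * pqInt p q n) :=
  pqBern_central_moment' hq hqp n hn hp x hx
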